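/- arXiv:1002.4920 — 2 statements merged into one kernel-verified Lean document; each statement's English description precedes it below -/
import Mathlib

section
/- Fix d ≥ 1 lat A, B ∈ M_d(ℂ). Let I_A denote the two-sided ideal of ℂ⟨x₁,…,x_d⟩ generated by the single quadratic element Σ_{i,j=1}^d a_{ij} x_i x_j, and similarly I_B. For a unitary d×d matrix U = (u_{ij}) let Φ_U be the algebra automorphism of ℂ⟨x₁,…,x_d⟩ determined by Φ_U(x_i) = Σ_j u_{ij} x_j. Then there exists a unitary U with Φ_U(I_A) = I_B if and only if there exist a nonzero λ ∈ ℂ and a unitary d×d matrix V with B = λ Vᵀ A V. -/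
open Matrix

noncomputable section

/-- The free (noncommutative polynomial) algebra `ℂ⟨x₁,…,x_d⟩`. -/
abbrev FreeAlg (d : ℕ) : Type := MonoidAlgebra ℂ (FreeMonoid (Fin d))

/-- The generator `x_i` of `ℂ⟨x₁,…,x_d⟩`. -/
def Xg (d : ℕ) (i : Fin d) : FreeAlg d :=
  MonoidAlgebra.of ℂ (FreeMonoid (Fin d)) (FreeMonoid.of i)

/-- Evaluation `p ↦ p(T)`. -/
def evalTuple {d : ℕ} {A : Type*} [Semiring A] [Algebra ℂ A] (T : Fin d → A) :
    FreeAlg d →ₐ[ℂ] A :=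
  MonoidAlgebra.lift ℂ A (FreeMonoid (Fin d)) (FreeMonoid.lift T)

/-- The unitary change of variables `Φ_U` determined by `Φ_U(x_i) = Σ_j u_{ij} x_j`. -/
def PhiU {d : ℕ} (U : Matrix (Fin d) (Fin d) ℂ) : FreeAlg d →ₐ[ℂ] FreeAlg d :=
  evalTuple (fun i => ∑ j : Fin d, U i j • Xg d j)

/-- The ideal `I_A` generated by the single quadratic element `Σ_{i,j} a_{ij} x_i x_j`. -/
def quadIdeal {d : ℕ} (A : Matrix (Fin d) (Fin d) ℂ) : TwoSidedIdeal (FreeAlg d) :=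
  TwoSidedIdeal.span {∑ i : Fin d, ∑ j : Fin d, A i j • (Xg d i * Xg d j)}

namespace Stmt16Aux

variable {d : ℕ}

/-- The quadratic element. -/
def quadElt (A : Matrix (Fin d) (Fin d) ℂ) : FreeAlg d :=
  ∑ i : Fin d, ∑ j : Fin d, A i j • (Xg d i * Xg d j)

lemma quadIdeal_eq (A : Matrix (Fin d) (Fin d) ℂ) :
    quadIdeal A = TwoSidedIdeal.span {quadElt A} := rfl

lemma evalTuple_Xg {A : Type*} [Semiring A] [Algebra ℂ A] (T : Fin d → A) (k : Fin d) :
    evalTuple T (Xg d k) = T k := by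
  simp [evalTuple, Xg, MonoidAlgebra.lift_of]

lemma PhiU_Xg (U : Matrix (Fin d) (Fin d) ℂ) (k : Fin d) :
    PhiU U (Xg d k) = ∑ j : Fin d, U k j • Xg d j := by
  simp [PhiU, evalTuple_Xg]

lemma sum4_swap {M : Type*} [AddCommMonoid M] (f : Fin d → Fin d → Fin d → Fin d → M) :
    ∑ k : Fin d, ∑ l : Fin d, ∑ m : Fin d, ∑ n : Fin d, f k l m n
      = ∑ m : Fin d, ∑ n : Fin d, ∑ k : Fin d, ∑ l : Fin d, f k l m n :=
  calc ∑ k : Fin d, ∑ l : Fin d, ∑ m : Fin d, ∑ n : Fin d, f k l m n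
      = ∑ k : Fin d, ∑ m : Fin d, ∑ l : Fin d, ∑ n : Fin d, f k l m n :=
        Finset.sum_congr rfl (fun k _ => Finset.sum_comm)
    _ = ∑ m : Fin d, ∑ k : Fin d, ∑ l : Fin d, ∑ n : Fin d, f k l m n := Finset.sum_comm
    _ = ∑ m : Fin d, ∑ k : Fin d, ∑ n : Fin d, ∑ l : Fin d, f k l m n :=
        Finset.sum_congr rfl (fun m _ => Finset.sum_congr rfl (fun k _ => Finset.sum_comm))
    _ = ∑ m : Fin d, ∑ n : Fin d, ∑ k : Fin d, ∑ l : Fin d, f k l m n :=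
        Finset.sum_congr rfl (fun m _ => Finset.sum_comm)

lemma PhiU_quadElt (U A : Matrix (Fin d) (Fin d) ℂ) :
    PhiU U (quadElt A) = quadElt (Uᵀ * A * U) := by
  unfold quadElt
  simp only [map_sum, _root_.map_smul, _root_.map_mul, PhiU_Xg, Finset.sum_mul_sum,
    smul_mul_smul_comm, Matrix.mul_apply, Matrix.transpose_apply, Finset.smul_sum,
    Finset.sum_smul, smul_smul, Finset.sum_mul, Finset.mul_sum, Finset.smul_sum]
  calc ∑ k : Fin d, ∑ l : Fin d, ∑ n : Fin d, ∑ m : Fin d,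
          (A k l * (U k m * U l n)) • (Xg d m * Xg d n)
      = ∑ n : Fin d, ∑ m : Fin d, ∑ k : Fin d, ∑ l : Fin d,
          (A k l * (U k m * U l n)) • (Xg d m * Xg d n) := sum4_swap _
    _ = ∑ m : Fin d, ∑ n : Fin d, ∑ k : Fin d, ∑ l : Fin d,
          (A k l * (U k m * U l n)) • (Xg d m * Xg d n) := Finset.sum_comm
    _ = ∑ m : Fin d, ∑ n : Fin d, ∑ l : Fin d, ∑ k : Fin d,
          (A k l * (U k m * U l n)) • (Xg d m * Xg d n) :=
        Finset.sum_congr rfl fun _ _ => Finset.sum_congr rfl fun _ _ => Finset.sum_comm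
    _ = ∑ m : Fin d, ∑ n : Fin d, ∑ l : Fin d, ∑ k : Fin d,
          (U k m * A k l * U l n) • (Xg d m * Xg d n) := by
        refine Finset.sum_congr rfl fun m _ => Finset.sum_congr rfl fun n _ =>
          Finset.sum_congr rfl fun l _ => Finset.sum_congr rfl fun k _ => ?_
        congr 1
        ring

lemma algHom_ext_gen {A' : Type*} [Semiring A'] [Algebra ℂ A'] {f g : FreeAlg d →ₐ[ℂ] A'}
    (h : ∀ k, f (Xg d k) = g (Xg d k)) : f = g := by
  apply MonoidAlgebra.algHom_ext
  case single_one_left => exact Subsingleton.elim _ _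
  intro w
  induction w using FreeMonoid.inductionOn with
  | one =>
    rw [show MonoidAlgebra.single (1 : FreeMonoid (Fin d)) (1 : ℂ) = 1 from rfl,
      _root_.map_one, _root_.map_one]
  | of x => exact h x
  | mul x y hx hy =>
    have e : MonoidAlgebra.single (x * y) (1 : ℂ)
        = MonoidAlgebra.single x (1 : ℂ) * MonoidAlgebra.single y (1 : ℂ) := by
      rw [MonoidAlgebra.single_mul_single, one_mul]
    rw [e, _root_.map_mul, _root_.map_mul, hx, hy]

lemma PhiU_comp (U W : Matrix (Fin d) (Fin d) ℂ) :
    (PhiU W).comp (PhiU U) = PhiU (U * W) := by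
  apply algHom_ext_gen
  intro k
  simp only [AlgHom.comp_apply, PhiU_Xg, map_sum, _root_.map_smul, Matrix.mul_apply,
    Finset.sum_smul, smul_smul]
  simp only [Finset.smul_sum, smul_smul]
  exact Finset.sum_comm

lemma PhiU_one : PhiU (1 : Matrix (Fin d) (Fin d) ℂ) = AlgHom.id ℂ (FreeAlg d) := by
  apply algHom_ext_gen
  intro k
  simp [PhiU_Xg, Matrix.one_apply, ite_smul]

/-! ### Coefficient extraction via 3×3 matrix evaluations -/

/-- The test tuple: `x_k ↦ δ_{ki} E₁₂ + δ_{kj} E₂₃`. -/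
def Tm (i j : Fin d) : Fin d → Matrix (Fin 3) (Fin 3) ℂ := fun k =>
  (if k = i then Matrix.single 0 1 1 else 0) + (if k = j then Matrix.single 1 2 1 else 0)

def ev (i j : Fin d) : FreeAlg d →ₐ[ℂ] Matrix (Fin 3) (Fin 3) ℂ := evalTuple (Tm i j)

/-- The constant-term functional. -/
def eps : FreeAlg d →ₐ[ℂ] ℂ := evalTuple (fun _ => (0 : ℂ))

/-- Strictly upper triangular. -/
def SU (M : Matrix (Fin 3) (Fin 3) ℂ) : Prop := ∀ p q : Fin 3, q ≤ p → M p q = 0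

lemma SU_mul {M N : Matrix (Fin 3) (Fin 3) ℂ} (hM : SU M) (hN : SU N) : SU (M * N) := by
  intro p q hqp
  rw [Matrix.mul_apply]
  apply Finset.sum_eq_zero
  intro k _
  by_cases hk : k ≤ p
  · rw [hM p k hk, zero_mul]
  · rw [hN k q (hqp.trans (not_le.mp hk).le), mul_zero]

lemma SU_Tm (i j k : Fin d) : SU (Tm i j k) := by
  intro p q h
  fin_cases p <;> fin_cases q <;>
    simp_all [Tm, Matrix.add_apply, Matrix.single] <;>
    split_ifs <;> simp_all

lemma SU_word (i j : Fin d) (w : FreeMonoid (Fin d)) (hw : w ≠ 1) :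
    SU (FreeMonoid.lift (Tm i j) w) := by
  induction w using FreeMonoid.inductionOn' with
  | one => exact absurd rfl hw
  | of_mul b a ih =>
    rw [_root_.map_mul]
    by_cases ha : a = 1
    · subst ha
      rw [_root_.map_one, mul_one, FreeMonoid.lift_eval_of]
      exact SU_Tm i j b
    · rw [FreeMonoid.lift_eval_of]
      exact SU_mul (SU_Tm i j b) (ih ha)

lemma eps_word (w : FreeMonoid (Fin d)) (hw : w ≠ 1) :
    FreeMonoid.lift (fun _ : Fin d => (0 : ℂ)) w = 0 := by
  induction w using FreeMonoid.inductionOn' with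
  | one => exact absurd rfl hw
  | of_mul b a ih =>
    rw [_root_.map_mul, FreeMonoid.lift_eval_of, zero_mul]

lemma ev_of (i j : Fin d) (w : FreeMonoid (Fin d)) :
    ev i j (MonoidAlgebra.of ℂ (FreeMonoid (Fin d)) w) = FreeMonoid.lift (Tm i j) w :=
  MonoidAlgebra.lift_of (FreeMonoid.lift (Tm i j)) w

lemma eps_of (w : FreeMonoid (Fin d)) :
    eps (MonoidAlgebra.of ℂ (FreeMonoid (Fin d)) w)
      = FreeMonoid.lift (fun _ : Fin d => (0 : ℂ)) w :=
  MonoidAlgebra.lift_of (FreeMonoid.lift (fun _ : Fin d => (0 : ℂ))) w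

/-- Lower-triangular part of any evaluation: diagonal is the constant term. -/
lemma ev_lower (i j : Fin d) (x : FreeAlg d) (p q : Fin 3) (h : q ≤ p) :
    ev i j x p q = if p = q then eps x else 0 := by
  induction x using MonoidAlgebra.induction_on with
  | of w =>
    rw [ev_of, eps_of]
    by_cases hw : w = 1
    · subst hw
      rw [_root_.map_one, _root_.map_one]
      exact Matrix.one_apply
    · rw [SU_word i j w hw p q h, eps_word w hw]
      split_ifs <;> rfl
  | add f g hf hg =>
    rw [map_add, map_add, Matrix.add_apply, hf, hg]
    split_ifs <;> simp
  | smul r f hf =>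
    rw [_root_.map_smul, _root_.map_smul, Matrix.smul_apply, hf]
    split_ifs <;> simp

lemma Tm_mul (i j k l : Fin d) :
    Tm i j k * Tm i j l
      = if k = i ∧ l = j then Matrix.single (0 : Fin 3) 2 1 else 0 := by
  have e1 : Matrix.single (0 : Fin 3) (1 : Fin 3) (1 : ℂ)
      * Matrix.single (0 : Fin 3) (1 : Fin 3) (1 : ℂ) = 0 :=
    Matrix.single_mul_single_of_ne _ _ _ _ (by decide) _
  have e2 : Matrix.single (0 : Fin 3) (1 : Fin 3) (1 : ℂ)
      * Matrix.single (1 : Fin 3) (2 : Fin 3) (1 : ℂ)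
      = Matrix.single (0 : Fin 3) (2 : Fin 3) (1 : ℂ) := by
    rw [Matrix.single_mul_single_same, one_mul]
  have e3 : Matrix.single (1 : Fin 3) (2 : Fin 3) (1 : ℂ)
      * Matrix.single (0 : Fin 3) (1 : Fin 3) (1 : ℂ) = 0 :=
    Matrix.single_mul_single_of_ne _ _ _ _ (by decide) _
  have e4 : Matrix.single (1 : Fin 3) (2 : Fin 3) (1 : ℂ)
      * Matrix.single (1 : Fin 3) (2 : Fin 3) (1 : ℂ) = 0 :=
    Matrix.single_mul_single_of_ne _ _ _ _ (by decide) _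
  unfold Tm
  split_ifs with h1 h2 h3 h4 h5 h6 h7 h8 h9 h10 <;>
    simp_all [add_mul, mul_add]

lemma ev_quadElt (C : Matrix (Fin d) (Fin d) ℂ) (i j : Fin d) :
    ev i j (quadElt C) = C i j • Matrix.single (0 : Fin 3) 2 1 := by
  unfold quadElt ev
  simp only [map_sum, _root_.map_smul, _root_.map_mul, evalTuple_Xg]
  have : ∀ k l : Fin d, (evalTuple (Tm i j) (Xg d k) * evalTuple (Tm i j) (Xg d l))
      = Tm i j k * Tm i j l := by intro k l; rw [evalTuple_Xg, evalTuple_Xg]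
  simp only [Tm_mul, smul_ite, smul_zero, ite_and]
  simp [Finset.sum_ite_eq', Finset.sum_ite_eq]

lemma eps_quadElt (C : Matrix (Fin d) (Fin d) ℂ) : eps (quadElt C) = 0 := by
  unfold quadElt eps
  simp [evalTuple_Xg]

/-- The key structural invariant of `quadIdeal C`. -/
lemma mem_quadIdeal_structure (C : Matrix (Fin d) (Fin d) ℂ) {x : FreeAlg d}
    (hx : x ∈ quadIdeal C) :
    eps x = 0 ∧ (∀ i j : Fin d, ev i j x 0 1 = 0 ∧ ev i j x 1 2 = 0) ∧
      ∃ μ : ℂ, ∀ i j : Fin d, ev i j x 0 2 = μ * C i j := by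
  set S : Set (FreeAlg d) :=
    {x | eps x = 0 ∧ (∀ i j : Fin d, ev i j x 0 1 = 0 ∧ ev i j x 1 2 = 0) ∧
      ∃ μ : ℂ, ∀ i j : Fin d, ev i j x 0 2 = μ * C i j} with hS
  have mul3 : ∀ (i j : Fin d) (a b : FreeAlg d) (p q : Fin 3),
      ev i j (a * b) p q = ev i j a p 0 * ev i j b 0 q + ev i j a p 1 * ev i j b 1 q
        + ev i j a p 2 * ev i j b 2 q := by
    intro i j a b p q
    rw [_root_.map_mul, Matrix.mul_apply, Fin.sum_univ_three]
  have hzero : (0 : FreeAlg d) ∈ S := by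
    refine ⟨map_zero _, fun i j => by simp, 0, fun i j => by simp⟩
  have hadd : ∀ {a b : FreeAlg d}, a ∈ S → b ∈ S → a + b ∈ S := by
    rintro a b ⟨ha0, ha1, μ, hμ⟩ ⟨hb0, hb1, ν, hν⟩
    refine ⟨by rw [map_add, ha0, hb0, add_zero], fun i j => ?_, μ + ν, fun i j => ?_⟩
    · constructor <;> rw [map_add, Matrix.add_apply] <;>
        simp [(ha1 i j).1, (ha1 i j).2, (hb1 i j).1, (hb1 i j).2]
    · rw [map_add, Matrix.add_apply, hμ i j, hν i j]; ring
  have hneg : ∀ {a : FreeAlg d}, a ∈ S → -a ∈ S := by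
    rintro a ⟨ha0, ha1, μ, hμ⟩
    refine ⟨by rw [map_neg, ha0, neg_zero], fun i j => ?_, -μ, fun i j => ?_⟩
    · constructor <;> rw [map_neg, Matrix.neg_apply] <;>
        simp [(ha1 i j).1, (ha1 i j).2]
    · rw [map_neg, Matrix.neg_apply, hμ i j]; ring
  have hmull : ∀ {a b : FreeAlg d}, b ∈ S → a * b ∈ S := by
    rintro a b ⟨hb0, hb1, μ, hμ⟩
    have hb11 : ∀ i j : Fin d, ev i j b 1 1 = 0 := fun i j => by
      rw [ev_lower i j b 1 1 le_rfl, if_pos rfl, hb0]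
    have hb21 : ∀ i j : Fin d, ev i j b 2 1 = 0 := fun i j => by
      rw [ev_lower i j b 2 1 (by decide)]; simp
    have hb22 : ∀ i j : Fin d, ev i j b 2 2 = 0 := fun i j => by
      rw [ev_lower i j b 2 2 le_rfl, if_pos rfl, hb0]
    have ha10 : ∀ i j : Fin d, ev i j a 1 0 = 0 := fun i j => by
      rw [ev_lower i j a 1 0 (by decide)]; simp
    have ha00 : ∀ i j : Fin d, ev i j a 0 0 = eps a := fun i j => by
      rw [ev_lower i j a 0 0 le_rfl, if_pos rfl]
    refine ⟨by rw [_root_.map_mul, hb0, mul_zero], fun i j => ?_, eps a * μ, fun i j => ?_⟩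
    · constructor
      · rw [mul3, (hb1 i j).1, hb11, hb21]; ring
      · rw [mul3, ha10, (hb1 i j).2, hb22]; ring
    · rw [mul3, ha00, (hb1 i j).2, hb22, hμ i j]; ring
  have hmulr : ∀ {a b : FreeAlg d}, a ∈ S → a * b ∈ S := by
    rintro a b ⟨ha0, ha1, μ, hμ⟩
    have ha11 : ∀ i j : Fin d, ev i j a 1 1 = 0 := fun i j => by
      rw [ev_lower i j a 1 1 le_rfl, if_pos rfl, ha0]
    have ha10 : ∀ i j : Fin d, ev i j a 1 0 = 0 := fun i j => by
      rw [ev_lower i j a 1 0 (by decide)]; simp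
    have ha00 : ∀ i j : Fin d, ev i j a 0 0 = 0 := fun i j => by
      rw [ev_lower i j a 0 0 le_rfl, if_pos rfl, ha0]
    have hb21 : ∀ i j : Fin d, ev i j b 2 1 = 0 := fun i j => by
      rw [ev_lower i j b 2 1 (by decide)]; simp
    have hb22 : ∀ i j : Fin d, ev i j b 2 2 = eps b := fun i j => by
      rw [ev_lower i j b 2 2 le_rfl, if_pos rfl]
    refine ⟨by rw [_root_.map_mul, ha0, zero_mul], fun i j => ?_, μ * eps b, fun i j => ?_⟩
    · constructor
      · rw [mul3, ha00, (ha1 i j).1, hb21]; ring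
      · rw [mul3, ha10, ha11, (ha1 i j).2]; ring
    · rw [mul3, ha00, (ha1 i j).1, hμ i j, hb22]; ring
  have hqc : quadElt C ∈ S := by
    refine ⟨eps_quadElt C, fun i j => ?_, 1, fun i j => ?_⟩
    · constructor <;> simp [ev_quadElt, Matrix.smul_apply, Matrix.single]
    · simp [ev_quadElt, Matrix.smul_apply, Matrix.single, mul_comm]
  have := TwoSidedIdeal.mem_span_iff.mp hx
    (TwoSidedIdeal.mk' S hzero hadd hneg hmull hmulr)
    (by intro y hy; rcases hy with rfl; rw [SetLike.mem_coe, TwoSidedIdeal.mem_mk']; exact hqc)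
  rw [TwoSidedIdeal.mem_mk'] at this
  exact this

lemma quadElt_mem_quadIdeal (C : Matrix (Fin d) (Fin d) ℂ) : quadElt C ∈ quadIdeal C :=
  TwoSidedIdeal.subset_span rfl

lemma quadElt_mem_structure {C B : Matrix (Fin d) (Fin d) ℂ}
    (h : quadElt B ∈ quadIdeal C) : ∃ μ : ℂ, B = μ • C := by
  obtain ⟨-, -, μ, hμ⟩ := mem_quadIdeal_structure C h
  refine ⟨μ, ?_⟩
  ext i j
  have := hμ i j
  rw [ev_quadElt] at this
  simpa [Matrix.smul_apply, Matrix.single] using this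

lemma PhiU_mem (U A : Matrix (Fin d) (Fin d) ℂ) {x : FreeAlg d} (hx : x ∈ quadIdeal A) :
    PhiU U x ∈ quadIdeal (Uᵀ * A * U) := by
  have h := TwoSidedIdeal.mem_span_iff.mp hx
    (TwoSidedIdeal.comap (PhiU U).toRingHom (quadIdeal (Uᵀ * A * U)))
    (by
      intro y hy
      rcases hy with rfl
      rw [SetLike.mem_coe, TwoSidedIdeal.mem_comap]
      show PhiU U (quadElt A) ∈ _
      rw [PhiU_quadElt]
      exact quadElt_mem_quadIdeal _)
  rwa [TwoSidedIdeal.mem_comap] at h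

lemma span_singleton_le {a : FreeAlg d} {I : TwoSidedIdeal (FreeAlg d)} (h : a ∈ I) :
    TwoSidedIdeal.span {a} ≤ I := fun x hx =>
  TwoSidedIdeal.mem_span_iff.mp hx I (by intro y hy; rcases hy with rfl; exact h)

lemma smul_mem_ts {a : FreeAlg d} {I : TwoSidedIdeal (FreeAlg d)} (μ : ℂ) (h : a ∈ I) :
    μ • a ∈ I := by
  have : μ • a = (μ • (1 : FreeAlg d)) * a := by rw [smul_mul_assoc, one_mul]
  rw [this]
  exact I.mul_mem_left _ _ h

lemma quadElt_smul (μ : ℂ) (C : Matrix (Fin d) (Fin d) ℂ) :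
    quadElt (μ • C) = μ • quadElt C := by
  unfold quadElt
  simp [Finset.smul_sum, smul_smul, Matrix.smul_apply]

lemma quadIdeal_smul {μ : ℂ} (hμ : μ ≠ 0) (C : Matrix (Fin d) (Fin d) ℂ) :
    quadIdeal (μ • C) = quadIdeal C := by
  rw [quadIdeal_eq, quadIdeal_eq, quadElt_smul]
  apply le_antisymm
  · exact span_singleton_le (smul_mem_ts μ (TwoSidedIdeal.subset_span rfl))
  · refine span_singleton_le ?_
    have h3 := smul_mem_ts (I := TwoSidedIdeal.span {μ • quadElt C}) μ⁻¹
      (TwoSidedIdeal.subset_span rfl)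
    rwa [smul_smul, inv_mul_cancel₀ hμ, one_smul] at h3

lemma conj_conj {U C : Matrix (Fin d) (Fin d) ℂ} (hU : U ∈ Matrix.unitaryGroup (Fin d) ℂ) :
    (star U)ᵀ * (Uᵀ * C * U) * star U = C := by
  have h1 : U * star U = 1 := Matrix.mem_unitaryGroup_iff.mp hU
  have h2 : (star U)ᵀ * Uᵀ = 1 := by rw [← Matrix.transpose_mul, h1, Matrix.transpose_one]
  calc (star U)ᵀ * (Uᵀ * C * U) * star U
      = ((star U)ᵀ * Uᵀ) * C * (U * star U) := by
        simp only [Matrix.mul_assoc]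
    _ = C := by rw [h1, h2, Matrix.one_mul, Matrix.mul_one]

end Stmt16Aux

open Stmt16Aux

/-- **Classification of maximal standard subproduct systems with one quadratic relation**
(via the correspondence between homogeneous ideals and subproduct systems): a unitary
change of variables maps `I_A` onto `I_B` iff `B = λ Vᵀ A V` for some `λ ≠ 0` and
unitary `V`. -/
theorem stmt16 (d : ℕ) (hd : 1 ≤ d) (A B : Matrix (Fin d) (Fin d) ℂ) :
    (∃ U ∈ Matrix.unitaryGroup (Fin d) ℂ,
        ⇑(PhiU U) '' (quadIdeal A : Set (FreeAlg d)) = (quadIdeal B : Set (FreeAlg d))) ↔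
    ∃ (lam : ℂ) (V : Matrix (Fin d) (Fin d) ℂ), lam ≠ 0 ∧
        V ∈ Matrix.unitaryGroup (Fin d) ℂ ∧ B = lam • (Vᵀ * A * V) := by
  constructor
  · rintro ⟨U, hU, hImg⟩
    have hBmem : quadElt B ∈ ⇑(PhiU U) '' (quadIdeal A : Set (FreeAlg d)) := by
      rw [hImg]
      exact quadElt_mem_quadIdeal B
    obtain ⟨x, hx, hφx⟩ := hBmem
    have hmem : quadElt B ∈ quadIdeal (Uᵀ * A * U) := by
      rw [← hφx]
      exact PhiU_mem U A hx
    obtain ⟨μ, hμ⟩ := quadElt_mem_structure hmem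
    by_cases h0 : μ = 0
    · have hB0 : B = 0 := by rw [hμ, h0, zero_smul]
      have hqC : quadElt (Uᵀ * A * U) ∈ quadIdeal B := by
        have h1 : PhiU U (quadElt A) ∈ ⇑(PhiU U) '' (quadIdeal A : Set (FreeAlg d)) :=
          Set.mem_image_of_mem _ (quadElt_mem_quadIdeal A)
        rw [hImg, PhiU_quadElt] at h1
        exact h1
      obtain ⟨ν, hν⟩ := quadElt_mem_structure hqC
      have hC0 : Uᵀ * A * U = 0 := by rw [hν, hB0, smul_zero]
      have hA0 : A = 0 := by
        have := conj_conj (C := A) hU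
        rw [hC0] at this
        simp at this
        exact this.symm
      exact ⟨1, 1, one_ne_zero, one_mem _, by simp [hB0, hA0]⟩
    · exact ⟨μ, U, h0, hU, hμ⟩
  · rintro ⟨lam, V, hlam, hV, rfl⟩
    refine ⟨V, hV, ?_⟩
    have hId : quadIdeal (lam • (Vᵀ * A * V)) = quadIdeal (Vᵀ * A * V) :=
      quadIdeal_smul hlam _
    rw [hId]
    apply Set.Subset.antisymm
    · rintro _ ⟨x, hx, rfl⟩
      exact PhiU_mem V A hx
    · intro y hy
      refine ⟨PhiU (star V) y, ?_, ?_⟩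
      · have h1 : PhiU (star V) y ∈ quadIdeal ((star V)ᵀ * (Vᵀ * A * V) * star V) :=
          PhiU_mem (star V) (Vᵀ * A * V) hy
        rwa [conj_conj hV] at h1
      · have h2 : (PhiU V).comp (PhiU (star V)) = PhiU ((star V) * V) := PhiU_comp _ _
        have h3 : (star V) * V = 1 := Matrix.mem_unitaryGroup_iff'.mp hV
        have h4 := DFunLike.congr_fun h2 y
        simp only [AlgHom.comp_apply] at h4
        rw [h4, h3, PhiU_one]
        rfl
end
end

section
/- Let d ≥ 1, k ≥ 1, and let Λ ⊆ {1,…,d}^ℤ be a nonempty k-step subshift of finite type with language Λ*. Let H_Λ := ℓ²(Λ*) with orthonormal basis (e_γ)_{γ ∈ Λ*}, and for each letter i let S_i ∈ B(H_Λ) be the bounded operator determined by S_i e_γ = e_{iγ} if iγ ∈ Λ* and S_i e_γ = 0 otherwise; for a word α = α₁⋯α_m write S^α := S_{α₁}⋯S_{α_m}. Then: (i) S_i* S_j = 0 for all i ≠ j; and (ii) for every letter i, the operator S_i* S_i − Σ_{α ∈ E_i^k} S^α (S^α)* equals the orthogonal projection onto the finite-dimensional subspace span{e_γ : γ ∈ Λ*,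 |γ| < k, iγ ∈ Λ*}; in particular S_i*S_i agrees with Σ_{α ∈ E_i^k} S^α (S^α)* modulo compact operators. -/
set_option synthInstance.maxHeartbeats 1000000
set_option maxHeartbeats 1000000
set_option linter.unnecessarySimpa false


noncomputable section

/-- A finite word occurs as a block of consecutive entries of a bi-infinite sequence. -/
def OccursIn {d : ℕ} (w : List (Fin d)) (x : ℤ → Fin d) : Prop :=
  ∃ m : ℤ, ∀ i : Fin w.length, x (m + (i : ℕ)) = w.get i

/-- The language of `Λ ⊆ {1,…,d}^ℤ`: all finite words occurring as blocks of points of `Λ`. -/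
def lang {d : ℕ} (Λ : Set (ℤ → Fin d)) : Set (List (Fin d)) :=
  {w | ∃ x ∈ Λ, OccursIn w x}

/-- `Λ` is a `k`-step subshift of finite type. -/
def IsKStepSFT {d : ℕ} (k : ℕ) (Λ : Set (ℤ → Fin d)) : Prop :=
  ∃ W : Set (List (Fin d)), W.Finite ∧ (∀ w ∈ W, w ≠ [] ∧ w.length ≤ k + 1) ∧
    Λ = {x | ∀ w ∈ W, ¬ OccursIn w x}

lemma occursIn_iff {d : ℕ} (w : List (Fin d)) (x : ℤ → Fin d) :
    OccursIn w x ↔ ∃ m : ℤ, ∀ j : ℕ, ∀ hj : j < w.length, x (m + j) = w[j] := by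
  constructor
  · rintro ⟨m, hm⟩; exact ⟨m, fun j hj => hm ⟨j, hj⟩⟩
  · rintro ⟨m, hm⟩; exact ⟨m, fun i => hm i i.2⟩

lemma lang_of_prefix {d : ℕ} {Λ : Set (ℤ → Fin d)} {w v : List (Fin d)}
    (h : w <+: v) (hv : v ∈ lang Λ) : w ∈ lang Λ := by
  obtain ⟨x, hx, m, hm⟩ := hv
  refine ⟨x, hx, m, fun i => ?_⟩
  have := hm ⟨(i : ℕ), lt_of_lt_of_le i.2 h.length_le⟩
  simpa [List.get_eq_getElem, h.getElem i.2] using this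

lemma lang_of_tail {d : ℕ} {Λ : Set (ℤ → Fin d)} {a : Fin d} {w : List (Fin d)}
    (h : (a :: w) ∈ lang Λ) : w ∈ lang Λ := by
  obtain ⟨x, hx, m, hm⟩ := h
  refine ⟨x, hx, m + 1, fun i => ?_⟩
  have := hm ⟨(i : ℕ) + 1, by simpa using Nat.succ_lt_succ i.2⟩
  simp only [List.get_eq_getElem] at this ⊢
  rw [show m + 1 + (i : ℕ) = m + ((i : ℕ) + 1 : ℕ) by push_cast; ring]
  simpa using this

lemma lang_of_append {d : ℕ} {Λ : Set (ℤ → Fin d)} {α w : List (Fin d)}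
    (h : (α ++ w) ∈ lang Λ) : w ∈ lang Λ := by
  induction α with
  | nil => simpa using h
  | cons a α ih => exact ih (lang_of_tail h)

lemma lang_splice {d k : ℕ} {Λ : Set (ℤ → Fin d)} (hΛ : IsKStepSFT k Λ)
    {γ : List (Fin d)} (hγ : γ ∈ lang Λ) (hlen : k ≤ γ.length) (i : Fin d)
    (hα : (i :: γ.take k) ∈ lang Λ) : (i :: γ) ∈ lang Λ := by
  obtain ⟨W, hWfin, hWlen, hΛeq⟩ := hΛ
  obtain ⟨x, hx, hxo⟩ := hγ
  rw [occursIn_iff] at hxo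
  obtain ⟨m, hm⟩ := hxo
  obtain ⟨y, hy, hyo⟩ := hα
  rw [occursIn_iff] at hyo
  obtain ⟨p, hp⟩ := hyo
  -- define the spliced sequence
  set z : ℤ → Fin d := fun n => if n ≤ p then y n else x (m + (n - p - 1)) with hz
  -- z agrees with y on (-∞, p + k]
  have hzy : ∀ n : ℤ, n ≤ p + k → z n = y n := by
    intro n hn
    by_cases h1 : n ≤ p
    · simp [hz, h1]
    · push_neg at h1
      obtain ⟨j, hj, rfl⟩ : ∃ j : ℕ, (j : ℤ) < k ∧ n = p + 1 + j := by
        refine ⟨(n - p - 1).toNat, ?_, ?_⟩ <;>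
          [skip; rw [Int.toNat_of_nonneg (by omega)]] <;> omega
      have hjk : j < k := by exact_mod_cast hj
      have h2 : z (p + 1 + j) = x (m + j) := by
        simp only [hz]
        rw [if_neg (by omega)]
        congr 1; omega
      have h3 : x (m + j) = γ[j]'(lt_of_lt_of_le hjk hlen) := hm j (lt_of_lt_of_le hjk hlen)
      have h4 : y (p + 1 + j) = γ[j]'(lt_of_lt_of_le hjk hlen) := by
        have := hp (j + 1) (by simp [Nat.lt_succ_iff, Nat.succ_le_of_lt, hjk,
          List.length_take, Nat.lt_succ_of_lt]; omega)
        rw [show p + ((j : ℕ) + 1 : ℕ) = p + 1 + j by push_cast; ring] at this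
        rw [this]
        simp [List.getElem_take]
      rw [h2, h3, h4]
  -- z agrees with shifted x on [p+1, ∞)
  have hzx : ∀ n : ℤ, p + 1 ≤ n → z n = x (m + (n - p - 1)) := by
    intro n hn; simp only [hz]; rw [if_neg (by omega)]
  -- z ∈ Λ
  have hzΛ : z ∈ Λ := by
    rw [hΛeq]
    intro w hw hwo
    rw [occursIn_iff] at hwo
    obtain ⟨q, hq⟩ := hwo
    obtain ⟨hwne, hwlen⟩ := hWlen w hw
    have hwpos : 1 ≤ w.length := List.length_pos_iff.mpr hwne
    by_cases hqp : q ≤ p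
    · -- occurs in y
      have : OccursIn w y := by
        rw [occursIn_iff]
        refine ⟨q, fun j hj => ?_⟩
        rw [← hzy (q + j) (by omega), hq j hj]
      exact (hΛeq ▸ hy) w hw this
    · -- occurs in x
      push_neg at hqp
      have : OccursIn w x := by
        rw [occursIn_iff]
        refine ⟨m + (q - p - 1), fun j hj => ?_⟩
        rw [show m + (q - p - 1) + j = m + ((q + j) - p - 1) by ring,
          ← hzx (q + j) (by omega), hq j hj]
      exact (hΛeq ▸ hx) w hw this
  -- i :: γ occurs in z at p
  refine ⟨z, hzΛ, ?_⟩
  rw [occursIn_iff]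
  refine ⟨p, fun j hj => ?_⟩
  match j with
  | 0 =>
    have := hp 0 (by simp)
    simpa [hzy p (by omega)] using this
  | (j + 1) =>
    have hjγ : j < γ.length := by simpa using hj
    have := hm j hjγ
    rw [hzx (p + ((j : ℕ) + 1 : ℕ)) (by push_cast; omega)]
    rw [show m + (p + ((j : ℕ) + 1 : ℕ) - p - 1) = m + j by push_cast; ring, this]
    simp

/-- `H_Λ = ℓ²(Λ*)`, the Fock space of the subshift. -/
abbrev ShiftSp {d : ℕ} (Λ : Set (ℤ → Fin d)) : Type := lp (fun _ : ↥(lang Λ) => ℂ) 2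

/-- The standard basis vector `e_γ` of `ℓ²(Λ*)`. -/
def eVec {d : ℕ} (Λ : Set (ℤ → Fin d)) (γ : ↥(lang Λ)) : ShiftSp Λ := lp.single 2 γ 1

/-- `S^α = S_{α₁} ⋯ S_{α_m}` (empty product `= 1`). -/
def wordOp {d : ℕ} {A : Type*} [Monoid A] (S : Fin d → A) (α : List (Fin d)) : A :=
  (α.map S).prod

/-- `E_i^k = {α ∈ Λ^k : iα ∈ Λ*}`. -/
def Eik {d : ℕ} (Λ : Set (ℤ → Fin d)) (k : ℕ) (i : Fin d) : Set (List (Fin d)) :=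
  {α | α ∈ lang Λ ∧ α.length = k ∧ (i :: α) ∈ lang Λ}

section Hilbert

variable {d : ℕ} {Λ : Set (ℤ → Fin d)}

open scoped InnerProductSpace

lemma eVec_apply (γ β : ↥(lang Λ)) : (eVec Λ γ) β = if β = γ then 1 else 0 := by
  classical
  rw [eVec, lp.single_apply]
  split_ifs with h
  · subst h; simp
  · simp [h]

lemma inner_eVec_left (β : ↥(lang Λ)) (x : ShiftSp Λ) :
    ⟪eVec Λ β, x⟫_ℂ = x β := by
  classical
  rw [eVec, lp.inner_single_left]
  simp

lemma shiftSp_ext {x y : ShiftSp Λ} (h : ∀ β, x β = y β) : x = y :=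
  lp.ext (funext h)

lemma star_apply_coord (A : ShiftSp Λ →L[ℂ] ShiftSp Λ) (x : ShiftSp Λ) (β : ↥(lang Λ)) :
    (star A x) β = ⟪A (eVec Λ β), x⟫_ℂ := by
  rw [← inner_eVec_left, ContinuousLinearMap.star_eq_adjoint,
    ContinuousLinearMap.adjoint_inner_right]

lemma inner_eVec_eVec (β γ : ↥(lang Λ)) :
    ⟪eVec Λ β, eVec Λ γ⟫_ℂ = if β = γ then 1 else 0 := by
  rw [inner_eVec_left, eVec_apply]

lemma dense_span_eVec :
    Dense ((Submodule.span ℂ (Set.range (eVec Λ)) : Submodule ℂ (ShiftSp Λ)) : Set (ShiftSp Λ)) := by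
  have h : (Submodule.span ℂ (Set.range (eVec Λ))).topologicalClosure = ⊤ := by
    rw [Submodule.topologicalClosure_eq_top_iff]
    rw [Submodule.eq_bot_iff]
    intro x hx
    refine shiftSp_ext (fun β => ?_)
    have := hx (eVec Λ β) (Submodule.subset_span ⟨β, rfl⟩)
    rw [← inner_eVec_left]
    simpa using this
  have := congrArg (fun s : Submodule ℂ (ShiftSp Λ) => (s : Set (ShiftSp Λ))) h
  simp only [Submodule.topologicalClosure_coe, Submodule.top_coe] at this
  rw [dense_iff_closure_eq, this]

lemma clm_ext_eVec {A B : ShiftSp Λ →L[ℂ] ShiftSp Λ}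
    (h : ∀ γ, A (eVec Λ γ) = B (eVec Λ γ)) : A = B := by
  refine ContinuousLinearMap.ext_on dense_span_eVec ?_
  rintro _ ⟨γ, rfl⟩
  exact h γ

end Hilbert

section Ops

variable {d : ℕ} {Λ : Set (ℤ → Fin d)}
  (S : Fin d → ShiftSp Λ →L[ℂ] ShiftSp Λ)
  (hS1 : ∀ (i : Fin d) (γ : ↥(lang Λ)) (h : (i :: (γ : List (Fin d))) ∈ lang Λ),
      S i (eVec Λ γ) = eVec Λ ⟨i :: (γ : List (Fin d)), h⟩)
  (hS0 : ∀ (i : Fin d) (γ : ↥(lang Λ)), (i :: (γ : List (Fin d))) ∉ lang Λ →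
      S i (eVec Λ γ) = 0)

open scoped InnerProductSpace Classical

include hS1 hS0

lemma S_apply (i : Fin d) (γ : ↥(lang Λ)) :
    S i (eVec Λ γ) = if h : (i :: (γ : List (Fin d))) ∈ lang Λ
      then eVec Λ ⟨i :: (γ : List (Fin d)), h⟩ else 0 := by
  split_ifs with h
  · exact hS1 i γ h
  · exact hS0 i γ h

lemma wordOp_apply (α : List (Fin d)) (γ : ↥(lang Λ)) :
    wordOp S α (eVec Λ γ) = if h : (α ++ (γ : List (Fin d))) ∈ lang Λ
      then eVec Λ ⟨α ++ (γ : List (Fin d)), h⟩ else 0 := by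
  induction α with
  | nil =>
    rw [dif_pos (by simpa using γ.2)]
    simp [wordOp]
  | cons a α ih =>
    have hcons : wordOp S (a :: α) = S a * wordOp S α := by
      simp [wordOp, List.map_cons, List.prod_cons]
    rw [hcons]
    simp only [ContinuousLinearMap.mul_apply]
    rw [ih]
    by_cases h1 : (α ++ (γ : List (Fin d))) ∈ lang Λ
    · rw [dif_pos h1, S_apply S hS1 hS0 a ⟨α ++ (γ : List (Fin d)), h1⟩]
      by_cases h2 : ((a :: α) ++ (γ : List (Fin d))) ∈ lang Λ
      · rw [dif_pos h2,
          dif_pos (show a :: ((⟨α ++ ↑γ, h1⟩ : ↥(lang Λ)) : List (Fin d)) ∈ lang Λ from h2)]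
        rfl
      · rw [dif_neg h2,
          dif_neg (show ¬ a :: ((⟨α ++ ↑γ, h1⟩ : ↥(lang Λ)) : List (Fin d)) ∈ lang Λ from h2)]
    · rw [dif_neg h1, map_zero]
      split_ifs with h2
      · exact absurd (lang_of_tail (show (a :: (α ++ ↑γ)) ∈ lang Λ from h2)) h1
      · rfl

lemma inner_SeVec_SeVec (i : Fin d) (β γ : ↥(lang Λ)) :
    ⟪S i (eVec Λ β), S i (eVec Λ γ)⟫_ℂ =
      if β = γ ∧ (i :: (β : List (Fin d))) ∈ lang Λ then 1 else 0 := by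
  by_cases h : β = γ
  · subst h
    rw [S_apply S hS1 hS0]
    split_ifs with h1 h2 h2
    · rw [inner_eVec_eVec, if_pos rfl]
    · exact absurd ⟨rfl, h1⟩ h2
    · exact absurd h2.2 h1
    · simp
  · rw [if_neg (fun hc => h hc.1), S_apply S hS1 hS0, S_apply S hS1 hS0]
    split_ifs with h1 h2
    · rw [inner_eVec_eVec,
        if_neg (fun hc => h (Subtype.ext (by simpa using congrArg Subtype.val hc)))]
    all_goals simp

lemma starS_S_ne (i j : Fin d) (hij : i ≠ j) : star (S i) * S j = 0 := by
  refine clm_ext_eVec (fun γ => ?_)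
  refine shiftSp_ext (fun β => ?_)
  simp only [ContinuousLinearMap.mul_apply, ContinuousLinearMap.zero_apply]
  rw [star_apply_coord]
  rw [S_apply S hS1 hS0, S_apply S hS1 hS0]
  split_ifs with h1 h2 h2
  · rw [inner_eVec_eVec, if_neg (by simp [Subtype.ext_iff]; exact fun hc _ => hij hc)]
    simp [lp.coeFn_zero]
  all_goals simp [lp.coeFn_zero]

lemma starS_S_self (i : Fin d) (γ : ↥(lang Λ)) :
    (star (S i) * S i) (eVec Λ γ) =
      if (i :: (γ : List (Fin d))) ∈ lang Λ then eVec Λ γ else 0 := by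
  refine shiftSp_ext (fun β => ?_)
  simp only [ContinuousLinearMap.mul_apply]
  rw [star_apply_coord, inner_SeVec_SeVec S hS1 hS0]
  split_ifs with h1 h2 h2
  · rw [eVec_apply, if_pos h1.1]
  · exact absurd (h1.1 ▸ h1.2) h2
  · rw [eVec_apply, if_neg (fun hc => h1 ⟨hc, by rw [hc]; exact h2⟩)]
  · simp [lp.coeFn_zero]

end Ops

section Ops2

variable {d k : ℕ} {Λ : Set (ℤ → Fin d)}
  (S : Fin d → ShiftSp Λ →L[ℂ] ShiftSp Λ)
  (hS1 : ∀ (i : Fin d) (γ : ↥(lang Λ)) (h : (i :: (γ : List (Fin d))) ∈ lang Λ),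
      S i (eVec Λ γ) = eVec Λ ⟨i :: (γ : List (Fin d)), h⟩)
  (hS0 : ∀ (i : Fin d) (γ : ↥(lang Λ)), (i :: (γ : List (Fin d))) ∉ lang Λ →
      S i (eVec Λ γ) = 0)

open scoped InnerProductSpace Classical

lemma Eik_finite (i : Fin d) : (Eik Λ k i).Finite :=
  (List.finite_length_eq (Fin d) k).subset (fun α hα => hα.2.1)

include hS1 hS0

lemma T_apply (α : List (Fin d)) (γ : ↥(lang Λ)) :
    (wordOp S α * star (wordOp S α)) (eVec Λ γ) =
      if α <+: (γ : List (Fin d)) then eVec Λ γ else 0 := by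
  by_cases hpre : α <+: (γ : List (Fin d))
  · obtain ⟨ρ, hρ⟩ := hpre
    have hαρ : α ++ ρ ∈ lang Λ := by rw [hρ]; exact γ.2
    have hρlang : ρ ∈ lang Λ := lang_of_append hαρ
    have hv : star (wordOp S α) (eVec Λ γ) = eVec Λ ⟨ρ, hρlang⟩ := by
      refine shiftSp_ext (fun β => ?_)
      rw [star_apply_coord, wordOp_apply S hS1 hS0, eVec_apply]
      by_cases hb : β = ⟨ρ, hρlang⟩
      · subst hb
        rw [if_pos rfl, dif_pos (show α ++ ρ ∈ lang Λ from hαρ),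
          inner_eVec_eVec, if_pos (Subtype.ext hρ)]
      · rw [if_neg hb]
        by_cases h1 : α ++ (β : List (Fin d)) ∈ lang Λ
        · rw [dif_pos h1, inner_eVec_eVec, if_neg]
          intro hc
          apply hb
          have := congrArg Subtype.val hc
          simp only at this
          rw [← hρ] at this
          exact Subtype.ext (List.append_cancel_left this)
        · rw [dif_neg h1, inner_zero_left]
    rw [ContinuousLinearMap.mul_apply, hv, wordOp_apply S hS1 hS0,
      dif_pos (show α ++ ρ ∈ lang Λ from hαρ), if_pos ⟨ρ, hρ⟩]
    exact congrArg (eVec Λ) (Subtype.ext hρ)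
  · have hv : star (wordOp S α) (eVec Λ γ) = 0 := by
      refine shiftSp_ext (fun β => ?_)
      rw [star_apply_coord, wordOp_apply S hS1 hS0]
      by_cases h1 : α ++ (β : List (Fin d)) ∈ lang Λ
      · rw [dif_pos h1, inner_eVec_eVec,
          if_neg (fun hc => hpre ⟨β, congrArg Subtype.val hc⟩)]
        simp [lp.coeFn_zero]
      · rw [dif_neg h1, inner_zero_left]
        simp [lp.coeFn_zero]
    rw [ContinuousLinearMap.mul_apply, hv, map_zero, if_neg hpre]

lemma sum_T_apply (i : Fin d) (γ : ↥(lang Λ)) :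
    (∑ᶠ α ∈ Eik Λ k i, wordOp S α * star (wordOp S α)) (eVec Λ γ) =
      if (k ≤ (γ : List (Fin d)).length ∧
          (i :: (γ : List (Fin d)).take k) ∈ lang Λ) then eVec Λ γ else 0 := by
  rw [← Set.Finite.coe_toFinset (Eik_finite (Λ := Λ) (k := k) i), finsum_mem_coe_finset,
    ContinuousLinearMap.sum_apply]
  rw [Finset.sum_congr rfl (fun α _ => T_apply S hS1 hS0 α γ)]
  by_cases hc : k ≤ (γ : List (Fin d)).length ∧ (i :: (γ : List (Fin d)).take k) ∈ lang Λ
  · rw [if_pos hc]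
    have hmem : (γ : List (Fin d)).take k ∈ (Eik_finite (Λ := Λ) (k := k) i).toFinset := by
      rw [Set.Finite.mem_toFinset]
      exact ⟨lang_of_prefix (List.take_prefix k _) γ.2,
        by rw [List.length_take]; omega, hc.2⟩
    rw [Finset.sum_eq_single_of_mem _ hmem]
    · rw [if_pos (List.take_prefix k _)]
    · intro α hα hne
      rw [Set.Finite.mem_toFinset] at hα
      rw [if_neg]
      intro hpre
      apply hne
      rw [List.prefix_iff_eq_take.mp hpre, hα.2.1]
  · rw [if_neg hc]
    apply Finset.sum_eq_zero
    intro α hα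
    rw [Set.Finite.mem_toFinset] at hα
    rw [if_neg]
    intro hpre
    apply hc
    have hlen : k ≤ (γ : List (Fin d)).length := hα.2.1 ▸ hpre.length_le
    refine ⟨hlen, ?_⟩
    have : α = (γ : List (Fin d)).take k := by
      rw [List.prefix_iff_eq_take.mp hpre, hα.2.1]
    rw [← this]
    exact hα.2.2

lemma D_apply (hΛ : IsKStepSFT k Λ) (i : Fin d) (γ : ↥(lang Λ)) :
    (star (S i) * S i - ∑ᶠ α ∈ Eik Λ k i, wordOp S α * star (wordOp S α)) (eVec Λ γ) =
      if ((γ : List (Fin d)).length < k ∧ (i :: (γ : List (Fin d))) ∈ lang Λ)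
        then eVec Λ γ else 0 := by
  rw [ContinuousLinearMap.sub_apply, starS_S_self S hS1 hS0, sum_T_apply S hS1 hS0]
  by_cases hlen : (γ : List (Fin d)).length < k
  · have hB : ¬ (k ≤ (γ : List (Fin d)).length ∧
        (i :: (γ : List (Fin d)).take k) ∈ lang Λ) := fun hc => absurd hc.1 (not_le.mpr hlen)
    by_cases h1 : (i :: (γ : List (Fin d))) ∈ lang Λ
    · rw [if_pos h1, if_neg hB, sub_zero, if_pos ⟨hlen, h1⟩]
    · rw [if_neg h1, if_neg hB, sub_zero, if_neg (fun hc => h1 hc.2)]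
  · push_neg at hlen
    have hC : ¬ ((γ : List (Fin d)).length < k ∧ (i :: (γ : List (Fin d))) ∈ lang Λ) :=
      fun hc => absurd hc.1 (not_lt.mpr hlen)
    have hiff : (i :: (γ : List (Fin d))) ∈ lang Λ ↔
        (i :: (γ : List (Fin d)).take k) ∈ lang Λ := by
      constructor
      · intro h
        exact lang_of_prefix (List.cons_prefix_cons.mpr ⟨rfl, List.take_prefix k _⟩) h
      · intro h
        exact lang_splice hΛ γ.2 hlen i h
    by_cases h1 : (i :: (γ : List (Fin d))) ∈ lang Λ
    · rw [if_pos h1, if_pos (show k ≤ (γ : List (Fin d)).length ∧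
          (i :: (γ : List (Fin d)).take k) ∈ lang Λ from ⟨hlen, hiff.mp h1⟩),
        sub_self, if_neg hC]
    · rw [if_neg h1, if_neg (show ¬ (k ≤ (γ : List (Fin d)).length ∧
          (i :: (γ : List (Fin d)).take k) ∈ lang Λ) from fun hc => h1 (hiff.mpr hc.2)),
        sub_zero, if_neg hC]

end Ops2

section Main

variable {d k : ℕ} {Λ : Set (ℤ → Fin d)}

open scoped InnerProductSpace Classical

/-- The finite-dimensional subspace spanned by the `e_γ` with `|γ| < k` and `iγ ∈ Λ*`. -/
def Kspan (Λ : Set (ℤ → Fin d)) (k : ℕ) (i : Fin d) : Submodule ℂ (ShiftSp Λ) :=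
  Submodule.span ℂ {v | ∃ γ : ↥(lang Λ), (γ : List (Fin d)).length < k ∧
    (i :: (γ : List (Fin d))) ∈ lang Λ ∧ v = eVec Λ γ}

lemma Kspan_fd (i : Fin d) : FiniteDimensional ℂ (Kspan Λ k i) := by
  apply FiniteDimensional.span_of_finite
  have h1 : {v | ∃ γ : ↥(lang Λ), (γ : List (Fin d)).length < k ∧
      (i :: (γ : List (Fin d))) ∈ lang Λ ∧ v = eVec Λ γ} ⊆
      eVec Λ '' (Subtype.val ⁻¹' {l : List (Fin d) | l.length < k}) := by
    rintro v ⟨γ, hγ1, _, rfl⟩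
    exact ⟨γ, hγ1, rfl⟩
  exact ((List.finite_length_lt (Fin d) k).preimage
    Subtype.val_injective.injOn).image _ |>.subset h1

lemma D_eq_proj
    (S : Fin d → ShiftSp Λ →L[ℂ] ShiftSp Λ)
    (hS1 : ∀ (i : Fin d) (γ : ↥(lang Λ)) (h : (i :: (γ : List (Fin d))) ∈ lang Λ),
      S i (eVec Λ γ) = eVec Λ ⟨i :: (γ : List (Fin d)), h⟩)
    (hS0 : ∀ (i : Fin d) (γ : ↥(lang Λ)), (i :: (γ : List (Fin d))) ∉ lang Λ →
      S i (eVec Λ γ) = 0)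
    (hΛ : IsKStepSFT k Λ) (i : Fin d) :
    haveI := Kspan_fd (Λ := Λ) (k := k) i
    haveI : CompleteSpace (Kspan Λ k i) := FiniteDimensional.complete ℂ _
    (star (S i) * S i - ∑ᶠ α ∈ Eik Λ k i, wordOp S α * star (wordOp S α)) =
      (Kspan Λ k i).subtypeL ∘L (Kspan Λ k i).orthogonalProjectionOnto := by
  haveI := Kspan_fd (Λ := Λ) (k := k) i
  haveI : CompleteSpace (Kspan Λ k i) := FiniteDimensional.complete ℂ _
  refine clm_ext_eVec (fun γ => ?_)
  rw [D_apply S hS1 hS0 hΛ i γ]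
  by_cases hP : (γ : List (Fin d)).length < k ∧ (i :: (γ : List (Fin d))) ∈ lang Λ
  · rw [if_pos hP]
    have hmem : eVec Λ γ ∈ Kspan Λ k i :=
      Submodule.subset_span ⟨γ, hP.1, hP.2, rfl⟩
    exact (Submodule.starProjection_eq_self_iff.mpr hmem).symm
  · rw [if_neg hP]
    have horth : eVec Λ γ ∈ (Kspan Λ k i)ᗮ := by
      rw [Submodule.mem_orthogonal]
      intro u hu
      induction hu using Submodule.span_induction with
      | mem v hv =>
        obtain ⟨δ, hδ1, hδ2, rfl⟩ := hv
        rw [inner_eVec_eVec, if_neg]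
        intro hc
        exact hP ⟨hc ▸ hδ1, hc ▸ hδ2⟩
      | zero => exact inner_zero_left _
      | add u v _ _ hu hv => rw [inner_add_left, hu, hv, add_zero]
      | smul c u _ hu => rw [inner_smul_left, hu, mul_zero]
    have : (Kspan Λ k i).orthogonalProjectionOnto (eVec Λ γ) = 0 :=
      Submodule.orthogonalProjectionOnto_apply_of_mem_orthogonal horth
    simp only [ContinuousLinearMap.comp_apply, this, ZeroMemClass.coe_zero,
      Submodule.subtypeL_apply]

end Main

/-- **Relations of the subshift creation operators modulo compacts.**  For a nonempty
`k`-step SFT `Λ` and the creation operators `S_i` on `ℓ²(Λ*)`: (i) `S_i* S_j = 0` for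
`i ≠ j`; (ii) `S_i* S_i − Σ_{α ∈ E_i^k} S^α (S^α)*` is the orthogonal projection onto the
finite-dimensional subspace `span{e_γ : γ ∈ Λ*, |γ| < k, iγ ∈ Λ*}`, and in particular it is
a compact operator. -/
theorem stmt18 (d k : ℕ) (hd : 1 ≤ d) (hk : 1 ≤ k)
    (Λ : Set (ℤ → Fin d)) (hΛ : IsKStepSFT k Λ) (hne : Λ.Nonempty)
    (S : Fin d → ShiftSp Λ →L[ℂ] ShiftSp Λ)
    (hS1 : ∀ (i : Fin d) (γ : ↥(lang Λ)) (h : (i :: (γ : List (Fin d))) ∈ lang Λ),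
      S i (eVec Λ γ) = eVec Λ ⟨i :: (γ : List (Fin d)), h⟩)
    (hS0 : ∀ (i : Fin d) (γ : ↥(lang Λ)), (i :: (γ : List (Fin d))) ∉ lang Λ →
      S i (eVec Λ γ) = 0) :
    (∀ i j : Fin d, i ≠ j → star (S i) * S j = 0) ∧
    (∀ i : Fin d,
      IsSelfAdjoint
        (star (S i) * S i - ∑ᶠ α ∈ Eik Λ k i, wordOp S α * star (wordOp S α)) ∧
      IsIdempotentElem
        (star (S i) * S i - ∑ᶠ α ∈ Eik Λ k i, wordOp S α * star (wordOp S α)) ∧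
      LinearMap.range
          ((star (S i) * S i - ∑ᶠ α ∈ Eik Λ k i, wordOp S α * star (wordOp S α) :
            ShiftSp Λ →L[ℂ] ShiftSp Λ) : ShiftSp Λ →ₗ[ℂ] ShiftSp Λ) =
        Submodule.span ℂ {v | ∃ γ : ↥(lang Λ), (γ : List (Fin d)).length < k ∧
          (i :: (γ : List (Fin d))) ∈ lang Λ ∧ v = eVec Λ γ} ∧
      FiniteDimensional ℂ
        ↥(Submodule.span ℂ {v | ∃ γ : ↥(lang Λ), (γ : List (Fin d)).length < k ∧
          (i :: (γ : List (Fin d))) ∈ lang Λ ∧ v = eVec Λ γ}) ∧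
      IsCompactOperator
        ⇑(star (S i) * S i - ∑ᶠ α ∈ Eik Λ k i, wordOp S α * star (wordOp S α))) := by
  refine ⟨fun i j hij => starS_S_ne S hS1 hS0 i j hij, fun i => ?_⟩
  haveI := Kspan_fd (Λ := Λ) (k := k) i
  haveI : CompleteSpace (Kspan Λ k i) := FiniteDimensional.complete ℂ _
  have hDQ := D_eq_proj S hS1 hS0 hΛ i
  set K := Kspan Λ k i with hK
  set Q := K.subtypeL ∘L K.orthogonalProjectionOnto with hQ
  have hQQ : ∀ v ∈ K, Q v = v := by
    intro v hv
    simp only [hQ, ContinuousLinearMap.comp_apply, Submodule.subtypeL_apply]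
    exact Submodule.starProjection_eq_self_iff.mpr hv
  refine ⟨?_, ?_, ?_, ?_, ?_⟩
  · rw [hDQ]
    exact isSelfAdjoint_starProjection K
  · rw [IsIdempotentElem, hDQ]
    refine ContinuousLinearMap.ext (fun x => ?_)
    show Q (Q x) = Q x
    exact hQQ _ (by simp [hQ])
  · rw [hDQ]
    ext v
    constructor
    · rintro ⟨x, rfl⟩
      show Q x ∈ K
      simp [hQ]
    · intro hv
      exact ⟨v, hQQ v hv⟩
  · exact Kspan_fd i
  · rw [hDQ]
    rw [isCompactOperator_iff_exists_mem_nhds_image_subset_compact]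
    refine ⟨Metric.closedBall 0 1, Metric.closedBall_mem_nhds 0 one_pos,
      K.subtypeL '' Metric.closedBall (0 : K) 1, ?_, ?_⟩
    · haveI : ProperSpace K := FiniteDimensional.proper ℂ K
      exact (isCompact_closedBall (0 : K) 1).image K.subtypeL.continuous
    · rintro _ ⟨x, hx, rfl⟩
      refine ⟨K.orthogonalProjectionOnto x, ?_, rfl⟩
      rw [Metric.mem_closedBall, dist_zero_right]
      calc ‖K.orthogonalProjectionOnto x‖ ≤ ‖K.orthogonalProjectionOnto‖ * ‖x‖ :=
            (K.orthogonalProjectionOnto).le_opNorm x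
        _ ≤ 1 * 1 := mul_le_mul (Submodule.orthogonalProjectionOnto_norm_le K)
            (by simpa [dist_zero_right] using hx) (norm_nonneg x) zero_le_one
        _ = 1 := one_mul 1
end
end
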